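/- Let G be a graph on ν vertices and n a positive integer with ν ≡ n (mod 2), δ(G) ≥ (ν+n)/2 − 1, and α(G) ≤ (ν−n)/2. Then G fails to be n-factor-critical if and only if (ν−n)/2 is odd and G = G₀ ∨ (G₁ ∪ G₂), where G₀ is a graph on n vertices and G₁ = G₂ = K_{(ν−n)/2}. -/

import Mathlib

open SimpleGraph

/-- `G` has a perfect matching. -/
def HasPM {W : Type*} (G : SimpleGraph W) : Prop :=
  ∃ M : G.Subgraph, M.IsPerfectMatching

/-- `G` is `k`-extendable: `G` is connected, has a matching of size `k`, and every
matching of size `k` extends to a perfect matching. -/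
def IsKExtendable {W : Type*} (G : SimpleGraph W) (k : ℕ) : Prop :=
  G.Connected ∧
  (∃ M : G.Subgraph, M.IsMatching ∧ M.verts.ncard = 2 * k) ∧
  ∀ M : G.Subgraph, M.IsMatching → M.verts.ncard = 2 * k →
    ∃ P : G.Subgraph, P.IsPerfectMatching ∧ M ≤ P

/-- `G` is `n`-factor-critical: deleting any `n` vertices leaves a graph with a
perfect matching. -/
def IsNFactorCritical {W : Type*} (G : SimpleGraph W) (n : ℕ) : Prop :=
  ∀ S : Finset W, S.card = n → HasPM (G.induce ((↑S : Set W)ᶜ))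

/-- The independence number of `G`. -/
noncomputable def indepNum {W : Type*} (G : SimpleGraph W) : ℕ :=
  sSup {n | ∃ s : Finset W, (∀ u ∈ s, ∀ v ∈ s, ¬ G.Adj u v) ∧ s.card = n}

/-- The number of odd connected components of `G`. -/
noncomputable def numOddComponents {W : Type*} (G : SimpleGraph W) : ℕ :=
  Nat.card {c : G.ConnectedComponent // Odd (Nat.card c.supp)}

/-- `G` is `k½`-extendable: `G` is connected and for every vertex `v`, `G - v` has a
matching of size `k` and every matching of size `k` in `G - v` extends to a perfect
matching of `G - v`. -/
def IsHalfExtendable {W : Type*} (G : SimpleGraph W) (k : ℕ) : Prop :=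
  G.Connected ∧
  ∀ v : W,
    (∃ M : (G.induce ({v} : Set W)ᶜ).Subgraph, M.IsMatching ∧ M.verts.ncard = 2 * k) ∧
    ∀ M : (G.induce ({v} : Set W)ᶜ).Subgraph, M.IsMatching → M.verts.ncard = 2 * k →
      ∃ P : (G.induce ({v} : Set W)ᶜ).Subgraph, P.IsPerfectMatching ∧ M ≤ P

/-- The join of two graphs: all edges between the two vertex classes are added. -/
def graphJoin {α β : Type*} (G : SimpleGraph α) (H : SimpleGraph β) :
    SimpleGraph (α ⊕ β) :=
  SimpleGraph.fromRel (fun a b =>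
    match a, b with
    | Sum.inl u, Sum.inl v => G.Adj u v
    | Sum.inr u, Sum.inr v => H.Adj u v
    | _, _ => True)

/-- The disjoint union of two graphs. -/
def graphUnion {α β : Type*} (G : SimpleGraph α) (H : SimpleGraph β) :
    SimpleGraph (α ⊕ β) :=
  SimpleGraph.fromRel (fun a b =>
    match a, b with
    | Sum.inl u, Sum.inl v => G.Adj u v
    | Sum.inr u, Sum.inr v => H.Adj u v
    | _, _ => False)

/-- The join `G ∨ K₁`: one new vertex joined to every vertex of `G`. -/
def joinK1 {W : Type*} (G : SimpleGraph W) : SimpleGraph (W ⊕ Unit) :=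
  graphJoin G (⊥ : SimpleGraph Unit)

/-- `G` is the join of a graph on `n` vertices with the disjoint union of two cliques
of size `m` (intrinsic formulation of `G = G₀ ∨ (K_m ∪ K_m)`). -/
def IsJoinTwoCliques {W : Type*} [Fintype W] [DecidableEq W] (G : SimpleGraph W) (n m : ℕ) : Prop :=
  ∃ S A B : Finset W,
    Disjoint S A ∧ Disjoint S B ∧ Disjoint A B ∧ S ∪ A ∪ B = Finset.univ ∧
    S.card = n ∧ A.card = m ∧ B.card = m ∧
    (∀ u ∈ A, ∀ v ∈ A, u ≠ v → G.Adj u v) ∧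
    (∀ u ∈ B, ∀ v ∈ B, u ≠ v → G.Adj u v) ∧
    (∀ u ∈ A, ∀ v ∈ B, ¬ G.Adj u v) ∧
    (∀ u ∈ S, ∀ v ∈ A ∪ B, G.Adj u v)

/-- `A` induces in `G` the disjoint union of two factor-critical connected components,
each of size at least `minSize`. -/
def TwoFCComponents {W : Type*} [DecidableEq W] (G : SimpleGraph W) (A : Finset W) (minSize : ℕ) : Prop :=
  ∃ B C : Finset W,
    Disjoint B C ∧ B ∪ C = A ∧ minSize ≤ B.card ∧ minSize ≤ C.card ∧
    (∀ u ∈ B, ∀ v ∈ C, ¬ G.Adj u v) ∧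
    (G.induce (↑B : Set W)).Connected ∧ (G.induce (↑C : Set W)).Connected ∧
    IsNFactorCritical (G.induce (↑B : Set W)) 1 ∧
    IsNFactorCritical (G.induce (↑C : Set W)) 1

set_option maxHeartbeats 1000000
set_option linter.unusedSectionVars false
set_option linter.unreachableTactic false
set_option linter.unusedTactic false

section MatchMachinery
open Finset
variable {W : Type*} [Fintype W] [DecidableEq W] (H : SimpleGraph W)

def ValidM (f : W → W) (s : Finset W) : Prop :=
  ∀ w ∈ s, f w ∈ s ∧ f w ≠ w ∧ H.Adj w (f w) ∧ f (f w) = w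

def pairFun (f : W → W) (a b : W) : W → W :=
  fun w => if w = a then b else if w = b then a else f w

variable {H}

lemma even_card_of_inv {s : Finset W} {f : W → W}
    (h : ∀ w ∈ s, f w ∈ s ∧ f w ≠ w ∧ f (f w) = w) : Even s.card := by
  classical
  induction s using Finset.strongInduction with
  | _ s ih =>
    rcases s.eq_empty_or_nonempty with rfl | ⟨a, ha⟩
    · simp
    · have hfa := h a ha
      have hsub : ({a, f a} : Finset W) ⊆ s := by
        intro x hx; simp only [Finset.mem_insert, Finset.mem_singleton] at hx
        rcases hx with rfl | rfl; exacts [ha, hfa.1]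
      have hss : s \ {a, f a} ⊂ s := Finset.sdiff_ssubset hsub (by simp)
      have heven := ih _ hss (fun w hw => by
        have hw' : w ∈ s := (Finset.sdiff_subset) hw
        have hfw := h w hw'
        refine ⟨?_, hfw.2.1, hfw.2.2⟩
        simp only [Finset.mem_sdiff, Finset.mem_insert, Finset.mem_singleton] at hw ⊢
        refine ⟨hfw.1, ?_⟩
        rintro (hfwa | hfwfa)
        · exact hw.2 (Or.inr (by rw [← hfwa, hfw.2.2]))
        · exact hw.2 (Or.inl (by
            have : f (f w) = f (f a) := by rw [hfwfa]
            rwa [hfw.2.2, hfa.2.2] at this)))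
      have hpair : ({a, f a} : Finset W).card = 2 := by
        rw [Finset.card_insert_of_notMem (by simp [Ne.symm hfa.2.1]), Finset.card_singleton]
      have hcard : (s \ {a, f a}).card = s.card - 2 := by
        rw [Finset.card_sdiff_of_subset hsub, hpair]
      have h2 : 2 ≤ s.card := hpair ▸ Finset.card_le_card hsub
      rw [hcard] at heven
      obtain ⟨k, hk⟩ := heven
      exact ⟨k + 1, by omega⟩

lemma validM_add {f : W → W} {s : Finset W} (h : ValidM H f s) {a b : W}
    (ha : a ∉ s) (hb : b ∉ s) (hab : a ≠ b) (hadj : H.Adj a b) :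
    ValidM H (pairFun f a b) (insert a (insert b s)) := by
  intro w hw
  simp only [Finset.mem_insert] at hw
  rcases hw with rfl | rfl | hw
  · refine ⟨by simp [pairFun, hab], ?_, ?_, ?_⟩ <;> simp [pairFun, hab, hab.symm, hadj]
  · refine ⟨by simp [pairFun, hab.symm, hab], ?_, ?_, ?_⟩ <;>
      simp [pairFun, hab, hab.symm, hadj.symm]
  · have hx := h w hw
    have hwa : w ≠ a := fun e => ha (e ▸ hw)
    have hwb : w ≠ b := fun e => hb (e ▸ hw)
    have hfa : f w ≠ a := fun e => ha (e ▸ hx.1)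
    have hfb : f w ≠ b := fun e => hb (e ▸ hx.1)
    refine ⟨?_, ?_, ?_, ?_⟩ <;> simp [pairFun, hwa, hwb, hfa, hfb, hx.1, hx.2.1, hx.2.2.1, hx.2.2.2]

lemma validM_del {f : W → W} {s : Finset W} (h : ValidM H f s) {x : W} (hx : x ∈ s) :
    ValidM H f (s \ {x, f x}) := by
  intro w hw
  simp only [Finset.mem_sdiff, Finset.mem_insert, Finset.mem_singleton] at hw ⊢
  obtain ⟨hws, hw2⟩ := hw
  have hh := h w hws
  refine ⟨⟨hh.1, ?_⟩, hh.2⟩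
  rintro (e | e)
  · exact hw2 (Or.inr (by rw [← e, hh.2.2.2]))
  · exact hw2 (Or.inl (by
      have : f (f w) = f (f x) := by rw [e]
      rwa [hh.2.2.2, (h x hx).2.2.2] at this))

lemma validM_hasPM {f : W → W} {s : Finset W} (h : ValidM H f s) (hs : s = Finset.univ) :
    ∃ M : H.Subgraph, M.IsPerfectMatching := by
  have hall : ∀ w : W, f w ≠ w ∧ H.Adj w (f w) ∧ f (f w) = w := by
    intro w; have := h w (hs ▸ Finset.mem_univ w); exact this.2
  refine ⟨⟨Set.univ, fun a b => H.Adj a b ∧ f a = b, fun hab => hab.1,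
    fun _ => Set.mem_univ _, ?_⟩, ?_, fun v => Set.mem_univ v⟩
  · constructor; intro a b hab
    exact ⟨hab.1.symm, by rw [← hab.2, (hall a).2.2]⟩
  · intro v _
    refine ⟨f v, ⟨(hall v).2.1, rfl⟩, ?_⟩
    rintro y ⟨-, rfl⟩; rfl

lemma key_lemma (m : ℕ) [DecidableRel H.Adj] (hcard : Fintype.card W = 2 * m)
    (hdeg : ∀ w : W, m - 1 ≤ H.degree w)
    (hind : ∀ I : Finset W, (∀ a ∈ I, ∀ b ∈ I, ¬ H.Adj a b) → I.card ≤ m)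
    (hnoPM : ¬ ∃ M : H.Subgraph, M.IsPerfectMatching) :
    Odd m ∧ ∃ A B : Finset W, Disjoint A B ∧ A ∪ B = Finset.univ ∧
      A.card = m ∧ B.card = m ∧
      (∀ a ∈ A, ∀ b ∈ A, a ≠ b → H.Adj a b) ∧
      (∀ a ∈ B, ∀ b ∈ B, a ≠ b → H.Adj a b) ∧
      (∀ a ∈ A, ∀ b ∈ B, ¬ H.Adj a b) := by
  classical
  -- a maximum matching
  obtain ⟨⟨f, s⟩, hval, hk⟩ : ∃ p : (W → W) × Finset W, ValidM H p.1 p.2 ∧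
      p.2.card = sSup {c | ∃ p : (W → W) × Finset W, ValidM H p.1 p.2 ∧ p.2.card = c} := by
    have h0 : 0 ∈ {c | ∃ p : (W → W) × Finset W, ValidM H p.1 p.2 ∧ p.2.card = c} :=
      ⟨(id, ∅), fun w hw => absurd hw (Finset.notMem_empty w), rfl⟩
    have hbdd : BddAbove {c | ∃ p : (W → W) × Finset W, ValidM H p.1 p.2 ∧ p.2.card = c} :=
      ⟨Fintype.card W, by rintro c ⟨p, -, rfl⟩; exact Finset.card_le_univ _⟩
    exact Nat.sSup_mem ⟨0, h0⟩ hbdd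
  replace hval : ValidM H f s := hval
  have hmax : ∀ (f' : W → W) (s' : Finset W), ValidM H f' s' → s'.card ≤ s.card := by
    intro f' s' h'
    rw [hk]
    exact le_csSup ⟨Fintype.card W, by rintro c ⟨p, -, rfl⟩; exact Finset.card_le_univ _⟩
      ⟨(f', s'), h', rfl⟩
  clear hk
  have hsne : s ≠ Finset.univ := fun e => hnoPM (validM_hasPM hval e)
  -- no valid matching on s ∪ {a,b}
  have hmax2 : ∀ (f' : W → W) (a b : W), a ∉ s → b ∉ s → a ≠ b →
      ¬ ValidM H f' (insert a (insert b s)) := by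
    intro f' a b ha hb hab hv
    have := hmax _ _ hv
    rw [Finset.card_insert_of_notMem (by simp [hab, ha]),
      Finset.card_insert_of_notMem hb] at this
    omega
  -- no two unmatched vertices are adjacent
  have hnadj : ∀ a b, a ∉ s → b ∉ s → a ≠ b → ¬ H.Adj a b := by
    intro a b ha hb hab hadj
    exact hmax2 _ a b ha hb hab (validM_add hval ha hb hab hadj)
  have hNs : ∀ a, a ∉ s → H.neighborFinset a ⊆ s := by
    intro a ha z hz
    by_contra hzs
    exact hnadj a z ha hzs ((H.mem_neighborFinset _ _).1 hz).ne ((H.mem_neighborFinset _ _).1 hz)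
  -- no augmenting path of length 3
  have key3 : ∀ a b, a ∉ s → b ∉ s → a ≠ b → ∀ x ∈ s, H.Adj a x → ¬ H.Adj b (f x) := by
    intro a b ha hb hab x hx hax hbfx
    have hx' := hval x hx
    have hfxs : f x ∈ s := hx'.1
    have nax : a ≠ x := fun e => ha (e ▸ hx)
    have nbx : b ≠ x := fun e => hb (e ▸ hx)
    have nafx : a ≠ f x := fun e => ha (e ▸ hfxs)
    have nbfx : b ≠ f x := fun e => hb (e ▸ hfxs)
    have nxfx : x ≠ f x := fun e => hx'.2.1 e.symm
    have v1 := validM_del hval hx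
    have v2 := validM_add v1
      (show a ∉ s \ {x, f x} by
        (clear hval hmax hmax2 hnadj hNs; try clear key3; try clear v1; try clear v2; try clear v3; try clear v4; try clear v5); simp only [Finset.mem_sdiff, Finset.mem_insert, Finset.mem_singleton]; tauto)
      (show x ∉ s \ {x, f x} by
        (clear hval hmax hmax2 hnadj hNs; try clear key3; try clear v1; try clear v2; try clear v3; try clear v4; try clear v5); simp only [Finset.mem_sdiff, Finset.mem_insert, Finset.mem_singleton]; tauto)
      nax hax
    have v3 := validM_add v2
      (show b ∉ insert a (insert x (s \ {x, f x})) by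
        (clear hval hmax hmax2 hnadj hNs; try clear key3; try clear v1; try clear v2; try clear v3; try clear v4; try clear v5); simp only [Finset.mem_insert, Finset.mem_sdiff, Finset.mem_singleton]; tauto)
      (show f x ∉ insert a (insert x (s \ {x, f x})) by
        (clear hval hmax hmax2 hnadj hNs; try clear key3; try clear v1; try clear v2; try clear v3; try clear v4; try clear v5); simp only [Finset.mem_insert, Finset.mem_sdiff, Finset.mem_singleton]; tauto)
      nbfx hbfx
    have hset : insert b (insert (f x) (insert a (insert x (s \ {x, f x})))) =
        insert a (insert b s) := by
      ext w
      simp only [Finset.mem_insert, Finset.mem_sdiff, Finset.mem_singleton]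
      constructor
      · rintro (rfl | rfl | rfl | rfl | h)
        · exact Or.inr (Or.inl rfl)
        · exact Or.inr (Or.inr hfxs)
        · exact Or.inl rfl
        · exact Or.inr (Or.inr hx)
        · exact Or.inr (Or.inr h.1)
      · rintro (rfl | rfl | h)
        · exact Or.inr (Or.inr (Or.inl rfl))
        · exact Or.inl rfl
        · by_cases e1 : w = x
          · exact Or.inr (Or.inr (Or.inr (Or.inl e1)))
          · by_cases e2 : w = f x
            · exact Or.inr (Or.inl e2)
            · exact Or.inr (Or.inr (Or.inr (Or.inr ⟨h, fun hc => by rcases hc with hc | hc <;> [exact e1 hc; exact e2 hc]⟩)))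
    rw [hset] at v3
    exact hmax2 _ a b ha hb hab v3
  -- no augmenting path of length 5
  have key5 : ∀ a b, a ∉ s → b ∉ s → a ≠ b → ∀ w₀ ∈ s, H.Adj a w₀ →
      ∀ z ∈ s, z ≠ w₀ → z ≠ f w₀ → H.Adj (f w₀) z → ¬ H.Adj b (f z) := by
    intro a b ha hb hab w₀ hw₀ haw z hz hzw hzfw hadj2 hbfz
    have hw := hval w₀ hw₀
    have hzv := hval z hz
    have hxs : f w₀ ∈ s := hw.1
    have hz's : f z ∈ s := hzv.1
    have nz'z : f z ≠ z := hzv.2.1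
    have nz'w : f z ≠ w₀ := fun e => hzfw (by rw [← e, hzv.2.2.2])
    have nz'x : f z ≠ f w₀ := fun e => hzw (by
      have : f (f z) = f (f w₀) := by rw [e]
      rwa [hzv.2.2.2, hw.2.2.2] at this)
    have nxw : f w₀ ≠ w₀ := hw.2.1
    have naw : a ≠ w₀ := fun e => ha (e ▸ hw₀)
    have nax : a ≠ f w₀ := fun e => ha (e ▸ hxs)
    have naz : a ≠ z := fun e => ha (e ▸ hz)
    have naz' : a ≠ f z := fun e => ha (e ▸ hz's)
    have nbw : b ≠ w₀ := fun e => hb (e ▸ hw₀)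
    have nbx : b ≠ f w₀ := fun e => hb (e ▸ hxs)
    have nbz : b ≠ z := fun e => hb (e ▸ hz)
    have nbz' : b ≠ f z := fun e => hb (e ▸ hz's)
    have v1 := validM_del hval hw₀
    have hz1 : z ∈ s \ {w₀, f w₀} := by
      (clear hval hmax hmax2 hnadj hNs; try clear key3; try clear v1; try clear v2; try clear v3; try clear v4; try clear v5); simp only [Finset.mem_sdiff, Finset.mem_insert, Finset.mem_singleton]; tauto
    have v2 := validM_del v1 hz1
    have hs2 : (s \ {w₀, f w₀}) \ {z, f z} = s \ {w₀, f w₀, z, f z} := by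
      ext w
      (clear hval hmax hmax2 hnadj hNs; try clear key3; try clear v1; try clear v2; try clear v3; try clear v4; try clear v5); simp only [Finset.mem_sdiff, Finset.mem_insert, Finset.mem_singleton]; tauto
    rw [hs2] at v2
    have v3 := validM_add v2
      (show a ∉ s \ {w₀, f w₀, z, f z} by
        (clear hval hmax hmax2 hnadj hNs; try clear key3; try clear v1; try clear v2; try clear v3; try clear v4; try clear v5); simp only [Finset.mem_sdiff, Finset.mem_insert, Finset.mem_singleton]; tauto)
      (show w₀ ∉ s \ {w₀, f w₀, z, f z} by
        (clear hval hmax hmax2 hnadj hNs; try clear key3; try clear v1; try clear v2; try clear v3; try clear v4; try clear v5); simp only [Finset.mem_sdiff, Finset.mem_insert, Finset.mem_singleton]; tauto)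
      naw haw
    have v4 := validM_add v3
      (show f w₀ ∉ insert a (insert w₀ (s \ {w₀, f w₀, z, f z})) by
        (clear hval hmax hmax2 hnadj hNs; try clear key3; try clear v1; try clear v2; try clear v3; try clear v4; try clear v5); simp only [Finset.mem_insert, Finset.mem_sdiff, Finset.mem_singleton]; tauto)
      (show z ∉ insert a (insert w₀ (s \ {w₀, f w₀, z, f z})) by
        (clear hval hmax hmax2 hnadj hNs; try clear key3; try clear v1; try clear v2; try clear v3; try clear v4; try clear v5); simp only [Finset.mem_insert, Finset.mem_sdiff, Finset.mem_singleton]; tauto)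
      (fun e => hzfw e.symm) hadj2
    have v5 := validM_add v4
      (show b ∉ insert (f w₀) (insert z (insert a (insert w₀ (s \ {w₀, f w₀, z, f z})))) by
        (clear hval hmax hmax2 hnadj hNs; try clear key3; try clear v1; try clear v2; try clear v3; try clear v4; try clear v5); simp only [Finset.mem_insert, Finset.mem_sdiff, Finset.mem_singleton]; tauto)
      (show f z ∉ insert (f w₀) (insert z (insert a (insert w₀ (s \ {w₀, f w₀, z, f z})))) by
        (clear hval hmax hmax2 hnadj hNs; try clear key3; try clear v1; try clear v2; try clear v3; try clear v4; try clear v5); simp only [Finset.mem_insert, Finset.mem_sdiff, Finset.mem_singleton]; tauto)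
      nbz' hbfz
    have hset : insert b (insert (f z) (insert (f w₀) (insert z (insert a (insert w₀
        (s \ {w₀, f w₀, z, f z})))))) = insert a (insert b s) := by
      ext w
      simp only [Finset.mem_insert, Finset.mem_sdiff, Finset.mem_singleton]
      constructor
      · rintro (rfl | rfl | rfl | rfl | rfl | rfl | h)
        · exact Or.inr (Or.inl rfl)
        · exact Or.inr (Or.inr hz's)
        · exact Or.inr (Or.inr hxs)
        · exact Or.inr (Or.inr hz)
        · exact Or.inl rfl
        · exact Or.inr (Or.inr hw₀)
        · exact Or.inr (Or.inr h.1)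
      · rintro (rfl | rfl | h)
        · exact Or.inr (Or.inr (Or.inr (Or.inr (Or.inl rfl))))
        · exact Or.inl rfl
        · by_cases e1 : w = w₀
          · exact Or.inr (Or.inr (Or.inr (Or.inr (Or.inr (Or.inl e1)))))
          · by_cases e2 : w = f w₀
            · exact Or.inr (Or.inr (Or.inl e2))
            · by_cases e3 : w = z
              · exact Or.inr (Or.inr (Or.inr (Or.inl e3)))
              · by_cases e4 : w = f z
                · exact Or.inr (Or.inl e4)
                · refine Or.inr (Or.inr (Or.inr (Or.inr (Or.inr (Or.inr ⟨h, fun hc => ?_⟩)))))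
                  rcases hc with hc | hc | hc | hc
                  exacts [e1 hc, e2 hc, e3 hc, e4 hc]
    rw [hset] at v5
    exact hmax2 _ a b ha hb hab v5
  -- basic consequences
  have hinj : ∀ p ∈ s, ∀ q ∈ s, f p = f q → p = q := by
    intro p hp q hq e
    have : f (f p) = f (f q) := by rw [e]
    rwa [(hval p hp).2.2.2, (hval q hq).2.2.2] at this
  have hseven : Even s.card :=
    even_card_of_inv (fun w hw => ⟨(hval w hw).1, (hval w hw).2.1, (hval w hw).2.2.2⟩)
  have hslt : s.card < 2 * m := by
    have h1 : s ⊂ Finset.univ := Finset.ssubset_univ_iff.2 hsne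
    have := Finset.card_lt_card h1
    rwa [Finset.card_univ, hcard] at this
  -- two unmatched vertices
  obtain ⟨u, hu', v, hv', huv⟩ : ∃ u ∈ Finset.univ \ s, ∃ v ∈ Finset.univ \ s, u ≠ v := by
    apply Finset.one_lt_card.1
    rw [Finset.card_sdiff_of_subset (Finset.subset_univ s), Finset.card_univ, hcard]
    obtain ⟨k, hk⟩ := hseven
    omega
  have hu : u ∉ s := (Finset.mem_sdiff.1 hu').2
  have hv : v ∉ s := (Finset.mem_sdiff.1 hv').2
  have hm1 : 1 ≤ m := by
    have : 0 < Fintype.card W := Fintype.card_pos_iff.2 ⟨u⟩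
    omega
  set Nu := H.neighborFinset u with hNudef
  set Nv := H.neighborFinset v with hNvdef
  have hNuS : Nu ⊆ s := hNs u hu
  have hNvS : Nv ⊆ s := hNs v hv
  have hNucard' : m - 1 ≤ Nu.card := by
    have := hdeg u; rwa [← SimpleGraph.card_neighborFinset_eq_degree, ← hNudef] at this
  have hNvcard' : m - 1 ≤ Nv.card := by
    have := hdeg v; rwa [← SimpleGraph.card_neighborFinset_eq_degree, ← hNvdef] at this
  have hadjNu : ∀ p, p ∈ Nu ↔ H.Adj u p := fun p => H.mem_neighborFinset u p
  have hadjNv : ∀ p, p ∈ Nv ↔ H.Adj v p := fun p => H.mem_neighborFinset v p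
  have himgsub : ∀ N : Finset W, N ⊆ s → N.image f ⊆ s := by
    intro N hN p hp
    obtain ⟨q, hq, rfl⟩ := Finset.mem_image.1 hp
    exact (hval q (hN hq)).1
  have himgcard : ∀ N : Finset W, N ⊆ s → (N.image f).card = N.card := by
    intro N hN
    apply Finset.card_image_of_injOn
    intro p hp q hq e
    exact hinj p (hN hp) q (hN hq) e
  have hdisj1 : ∀ a b, a ∉ s → b ∉ s → a ≠ b →
      Disjoint ((H.neighborFinset a).image f) (H.neighborFinset b) := by
    intro a b ha hb hab
    rw [Finset.disjoint_left]
    intro p hp hpb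
    obtain ⟨x, hx, rfl⟩ := Finset.mem_image.1 hp
    exact key3 a b ha hb hab x (hNs a ha hx) ((H.mem_neighborFinset a x).1 hx)
      ((H.mem_neighborFinset b (f x)).1 hpb)
  -- cardinality pinning
  have hcard2 : s.card = 2 * m - 2 ∧ Nu.card = m - 1 ∧ Nv.card = m - 1 := by
    have h1 := Finset.card_union_of_disjoint (hdisj1 u v hu hv huv)
    have h2 : Nu.image f ∪ Nv ⊆ s := Finset.union_subset (himgsub Nu hNuS) hNvS
    have h3 := Finset.card_le_card h2
    rw [← hNudef, ← hNvdef] at h1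
    rw [h1, himgcard Nu hNuS] at h3
    obtain ⟨k, hk⟩ := hseven
    omega
  obtain ⟨hscard, hNucard, hNvcard⟩ := hcard2
  have hcov : ∀ a b, a ∉ s → b ∉ s → a ≠ b →
      (H.neighborFinset a).card = m - 1 → (H.neighborFinset b).card = m - 1 →
      (H.neighborFinset a).image f ∪ H.neighborFinset b = s := by
    intro a b ha hb hab hca hcb
    apply Finset.eq_of_subset_of_card_le
      (Finset.union_subset (himgsub _ (hNs a ha)) (hNs b hb))
    rw [Finset.card_union_of_disjoint (hdisj1 a b ha hb hab), himgcard _ (hNs a ha), hca, hcb,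
      hscard]
    omega
  have hcov1 : Nu.image f ∪ Nv = s := hcov u v hu hv huv hNucard hNvcard
  have hcov2 : Nv.image f ∪ Nu = s := hcov v u hv hu huv.symm hNvcard hNucard
  -- all unmatched vertices are u or v
  have hunm : ∀ z, z ∉ s → z = u ∨ z = v := by
    intro z hz
    by_contra hc
    push_neg at hc
    have hsub : ({u, v, z} : Finset W) ⊆ Finset.univ \ s := by
      intro p hp
      simp only [Finset.mem_insert, Finset.mem_singleton] at hp
      rcases hp with rfl | rfl | rfl
      exacts [hu', hv', Finset.mem_sdiff.2 ⟨Finset.mem_univ _, hz⟩]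
    have hc3 : ({u, v, z} : Finset W).card = 3 := by
      rw [Finset.card_insert_of_notMem (by simp [huv, Ne.symm hc.1]),
        Finset.card_insert_of_notMem (by simp [Ne.symm hc.2]), Finset.card_singleton]
    have := Finset.card_le_card hsub
    rw [hc3, Finset.card_sdiff_of_subset (Finset.subset_univ s), Finset.card_univ, hcard, hscard] at this
    omega
  -- no common neighbours
  have hC : Nu ∩ Nv = ∅ := by
    by_contra hne
    obtain ⟨w0, hw0⟩ := Finset.nonempty_iff_ne_empty.2 hne
    set C := Nu ∩ Nv with hCdef
    set X := C.image f with hXdef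
    have hCs : C ⊆ s := (Finset.inter_subset_left).trans hNuS
    have hXs : X ⊆ s := himgsub C hCs
    have hXNu : ∀ p ∈ X, p ∉ Nu := by
      intro p hp hpN
      have hpX : p ∈ Nv.image f :=
        Finset.image_subset_image (hCdef ▸ Finset.inter_subset_right) hp
      exact (Finset.disjoint_left.1 (hdisj1 v u hv hu huv.symm)) hpX hpN
    have hXNv : ∀ p ∈ X, p ∉ Nv := by
      intro p hp hpN
      have hpX : p ∈ Nu.image f :=
        Finset.image_subset_image (hCdef ▸ Finset.inter_subset_left) hp
      exact (Finset.disjoint_left.1 (hdisj1 u v hu hv huv)) hpX hpN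
    have hNX : ∀ p ∈ X, H.neighborFinset p ⊆ C := by
      intro p hp z hz
      obtain ⟨c, hc, rfl⟩ := Finset.mem_image.1 hp
      have hcNu : c ∈ Nu := (Finset.mem_inter.1 hc).1
      have hcNv : c ∈ Nv := (Finset.mem_inter.1 hc).2
      have hadj_pz : H.Adj (f c) z := (H.mem_neighborFinset (f c) z).1 hz
      have hzs : z ∈ s := by
        by_contra hzs
        rcases hunm z hzs with rfl | rfl
        · exact hXNu _ hp ((hadjNu (f c)).2 hadj_pz.symm)
        · exact hXNv _ hp ((hadjNv (f c)).2 hadj_pz.symm)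
      by_cases hzc : z = c
      · exact hzc ▸ hc
      · have hzfc : z ≠ f c := fun e => hadj_pz.ne' e
        have h1 : ¬ H.Adj v (f z) := key5 u v hu hv huv c (hCs hc) ((hadjNu c).1 hcNu)
          z hzs hzc hzfc hadj_pz
        have h2 : ¬ H.Adj u (f z) := key5 v u hv hu huv.symm c (hCs hc) ((hadjNv c).1 hcNv)
          z hzs hzc hzfc hadj_pz
        have hfzs : f z ∈ s := (hval z hzs).1
        have hz1 : z ∈ Nu := by
          have : f z ∈ Nu.image f ∪ Nv := hcov1 ▸ hfzs
          rcases Finset.mem_union.1 this with h | h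
          · obtain ⟨q, hq, he⟩ := Finset.mem_image.1 h
            rwa [hinj q (hNuS hq) z hzs he] at hq
          · exact absurd ((hadjNv (f z)).1 h) h1
        have hz2 : z ∈ Nv := by
          have : f z ∈ Nv.image f ∪ Nu := hcov2 ▸ hfzs
          rcases Finset.mem_union.1 this with h | h
          · obtain ⟨q, hq, he⟩ := Finset.mem_image.1 h
            rwa [hinj q (hNvS hq) z hzs he] at hq
          · exact absurd ((hadjNu (f z)).1 h) h2
        exact Finset.mem_inter.2 ⟨hz1, hz2⟩
    -- the independent set X ∪ {u, v}
    have hXu : u ∉ X := fun h => hu (hXs h)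
    have hXv : v ∉ X := fun h => hv (hXs h)
    have hIcard : (insert u (insert v X)).card = X.card + 2 := by
      rw [Finset.card_insert_of_notMem (by simp [huv, hXu]),
        Finset.card_insert_of_notMem hXv]
    have hXcard : X.card = C.card := himgcard C hCs
    have hCcard : m - 1 ≤ C.card := by
      have hfw0 : f w0 ∈ X := Finset.mem_image_of_mem f hw0
      have := Finset.card_le_card (hNX (f w0) hfw0)
      have hd := hdeg (f w0)
      rw [← SimpleGraph.card_neighborFinset_eq_degree] at hd
      omega
    have hindep : ∀ a ∈ insert u (insert v X), ∀ b ∈ insert u (insert v X), ¬ H.Adj a b := by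
      intro a haI b hbI hadj
      simp only [Finset.mem_insert] at haI hbI
      rcases haI with rfl | rfl | haX
      · rcases hbI with rfl | rfl | hbX
        · exact H.irrefl hadj
        · exact hnadj a b hu hv huv hadj
        · exact hXNu b hbX ((hadjNu b).2 hadj)
      · rcases hbI with rfl | rfl | hbX
        · exact hnadj b a hu hv huv hadj.symm
        · exact H.irrefl hadj
        · exact hXNv b hbX ((hadjNv b).2 hadj)
      · rcases hbI with rfl | rfl | hbX
        · exact hXNu a haX ((hadjNu a).2 hadj.symm)
        · exact hXNv a haX ((hadjNv a).2 hadj.symm)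
        · have hbC : b ∈ C := hNX a haX ((H.mem_neighborFinset a b).2 hadj)
          rw [hCdef] at hbC
          exact hXNu b hbX (Finset.mem_inter.1 hbC).1
    have := hind _ hindep
    rw [hIcard, hXcard] at this
    omega
  -- N(u) and N(v) are f-invariant
  have hinv : ∀ a b, a ∉ s → b ∉ s → a ≠ b →
      (H.neighborFinset a).image f ∪ H.neighborFinset b = s →
      H.neighborFinset a ∩ H.neighborFinset b = ∅ →
      (H.neighborFinset b).card = m - 1 →
      (H.neighborFinset b).image f = H.neighborFinset b := by
    intro a b ha hb hab hcv hcap hcb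
    apply Finset.eq_of_subset_of_card_le
    · intro p hp
      obtain ⟨q, hq, rfl⟩ := Finset.mem_image.1 hp
      have hfq : f q ∈ s := (hval q (hNs b hb hq)).1
      have : f q ∈ (H.neighborFinset a).image f ∪ H.neighborFinset b := hcv ▸ hfq
      rcases Finset.mem_union.1 this with h | h
      · obtain ⟨r, hr, he⟩ := Finset.mem_image.1 h
        have : r = q := hinj r (hNs a ha hr) q (hNs b hb hq) he
        subst this
        exact absurd (Finset.mem_inter.2 ⟨hr, hq⟩) (by simp [hcap])
      · exact h
    · rw [himgcard _ (hNs b hb)]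
  have hNuinv : Nu.image f = Nu := hinv v u hv hu huv.symm hcov2
    (by rwa [Finset.inter_comm]) hNucard
  have hNvinv : Nv.image f = Nv := hinv u v hu hv huv hcov1 hC hNvcard
  -- no edges between N(u) and N(v)
  have hcross : ∀ a ∈ Nu, ∀ b ∈ Nv, ¬ H.Adj a b := by
    intro a ha b hb hadj
    have hfa : f a ∈ Nu := hNuinv ▸ Finset.mem_image_of_mem f ha
    have hfb : f b ∈ Nv := hNvinv ▸ Finset.mem_image_of_mem f hb
    have hbfa : b ≠ f a := by
      intro e
      exact absurd (Finset.mem_inter.2 ⟨e ▸ hfa, hb⟩) (by simp [hC])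
    have hba : b ≠ f (f a) := by
      rw [(hval a (hNuS ha)).2.2.2]
      intro e
      exact absurd (Finset.mem_inter.2 ⟨e ▸ ha, hb⟩) (by simp [hC])
    have hadj' : H.Adj (f (f a)) b := by rwa [(hval a (hNuS ha)).2.2.2]
    exact key5 u v hu hv huv (f a) (hNuS hfa) ((hadjNu (f a)).1 hfa) b (hNvS hb)
      hbfa hba hadj' ((hadjNv (f b)).1 hfb)
  -- the two cliques
  have hvNu : v ∉ Nu := fun h => hnadj u v hu hv huv ((hadjNu v).1 h)
  have huNv : u ∉ Nv := fun h => hnadj v u hv hu huv.symm ((hadjNv u).1 h)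
  have huNu : u ∉ Nu := fun h => H.irrefl ((hadjNu u).1 h)
  have hvNv : v ∉ Nv := fun h => H.irrefl ((hadjNv v).1 h)
  set A := insert u Nu with hAdef
  set B := insert v Nv with hBdef
  have hAcard : A.card = m := by
    rw [Finset.card_insert_of_notMem huNu, hNucard]; omega
  have hBcard : B.card = m := by
    rw [Finset.card_insert_of_notMem hvNv, hNvcard]; omega
  have hdisjAB : Disjoint A B := by
    rw [Finset.disjoint_left]
    intro p hpA hpB
    rcases Finset.mem_insert.1 hpA with rfl | hpA
    · rcases Finset.mem_insert.1 hpB with e | hpB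
      exacts [huv e, huNv hpB]
    · rcases Finset.mem_insert.1 hpB with e | hpB
      · exact hvNu (e ▸ hpA)
      · exact absurd (Finset.mem_inter.2 ⟨hpA, hpB⟩) (by simp [hC])
  have hABuniv : A ∪ B = Finset.univ := by
    apply Finset.eq_univ_of_card
    rw [Finset.card_union_of_disjoint hdisjAB, hAcard, hBcard, hcard]
    omega
  -- every vertex is in A or B
  have hmem : ∀ p : W, p ∈ A ∨ p ∈ B := by
    intro p
    have : p ∈ A ∪ B := hABuniv ▸ Finset.mem_univ p
    exact Finset.mem_union.1 this
  -- cross edges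
  have hABnadj : ∀ a ∈ A, ∀ b ∈ B, ¬ H.Adj a b := by
    intro a haA b hbB hadj
    rcases Finset.mem_insert.1 haA with rfl | haA
    · rcases Finset.mem_insert.1 hbB with rfl | hbB
      · exact hnadj a b hu hv huv hadj
      · exact absurd (Finset.mem_inter.2 ⟨(hadjNu b).2 hadj, hbB⟩) (by simp [hC])
    · rcases Finset.mem_insert.1 hbB with rfl | hbB
      · exact absurd (Finset.mem_inter.2 ⟨haA, (hadjNv a).2 hadj.symm⟩) (by simp [hC])
      · exact hcross a haA b hbB hadj
  -- cliques
  have hAclique : ∀ a ∈ A, ∀ b ∈ A, a ≠ b → H.Adj a b := by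
    intro a haA b hbA hab
    rcases Finset.mem_insert.1 haA with rfl | haA
    · rcases Finset.mem_insert.1 hbA with e | hbA
      · exact absurd e.symm hab
      · exact (hadjNu b).1 hbA
    · rcases Finset.mem_insert.1 hbA with rfl | hbA
      · exact ((hadjNu a).1 haA).symm
      · -- both in Nu
        have hNa : H.neighborFinset a = A \ {a} := by
          apply Finset.eq_of_subset_of_card_le
          · intro z hz
            have hadj : H.Adj a z := (H.mem_neighborFinset a z).1 hz
            have hzA : z ∈ A := by
              rcases hmem z with h | h
              · exact h
              · exact absurd hadj (fun hh => hABnadj a (Finset.mem_insert_of_mem haA) z h hh)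
            exact Finset.mem_sdiff.2 ⟨hzA, by simp [hadj.ne']⟩
          · rw [Finset.card_sdiff_of_subset (Finset.singleton_subset_iff.2 (Finset.mem_insert_of_mem haA)),
              hAcard, Finset.card_singleton]
            have := hdeg a
            rw [← SimpleGraph.card_neighborFinset_eq_degree] at this
            omega
        have : b ∈ H.neighborFinset a := by
          rw [hNa]
          exact Finset.mem_sdiff.2 ⟨Finset.mem_insert_of_mem hbA, by simp [hab.symm]⟩
        exact (H.mem_neighborFinset a b).1 this
  have hBclique : ∀ a ∈ B, ∀ b ∈ B, a ≠ b → H.Adj a b := by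
    intro a haB b hbB hab
    rcases Finset.mem_insert.1 haB with rfl | haB
    · rcases Finset.mem_insert.1 hbB with e | hbB
      · exact absurd e.symm hab
      · exact (hadjNv b).1 hbB
    · rcases Finset.mem_insert.1 hbB with rfl | hbB
      · exact ((hadjNv a).1 haB).symm
      · have hNb : H.neighborFinset a = B \ {a} := by
          apply Finset.eq_of_subset_of_card_le
          · intro z hz
            have hadj : H.Adj a z := (H.mem_neighborFinset a z).1 hz
            have hzB : z ∈ B := by
              rcases hmem z with h | h
              · exact absurd hadj.symm
                  (fun hh => hABnadj z h a (Finset.mem_insert_of_mem haB) hh)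
              · exact h
            exact Finset.mem_sdiff.2 ⟨hzB, by simp [hadj.ne']⟩
          · rw [Finset.card_sdiff_of_subset (Finset.singleton_subset_iff.2 (Finset.mem_insert_of_mem haB)),
              hBcard, Finset.card_singleton]
            have := hdeg a
            rw [← SimpleGraph.card_neighborFinset_eq_degree] at this
            omega
        have : b ∈ H.neighborFinset a := by
          rw [hNb]
          exact Finset.mem_sdiff.2 ⟨Finset.mem_insert_of_mem hbB, by simp [hab.symm]⟩
        exact (H.mem_neighborFinset a b).1 this
  have hoddm : Odd m := by
    have heNu : Even Nu.card := even_card_of_inv (fun w hw =>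
      ⟨hNuinv ▸ Finset.mem_image_of_mem f hw, (hval w (hNuS hw)).2.1,
        (hval w (hNuS hw)).2.2.2⟩)
    rw [hNucard] at heNu
    obtain ⟨k, hk⟩ := heNu
    exact ⟨k, by omega⟩
  exact ⟨hoddm, A, B, hdisjAB, hABuniv, hAcard, hBcard, hAclique, hBclique, hABnadj⟩

end MatchMachinery

/-- With ν ≡ n (mod 2), δ(G) ≥ (ν+n)/2 − 1 and α(G) ≤ (ν−n)/2: G fails to be
n-factor-critical iff (ν−n)/2 is odd and G = G₀ ∨ (K_{(ν−n)/2} ∪ K_{(ν−n)/2}) with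
|V(G₀)| = n. -/
theorem not_factorCritical_iff_joinTwoCliques {V : Type*} [Fintype V] [DecidableEq V]
    (G : SimpleGraph V) [DecidableRel G.Adj] (n : ℕ)
    (hpos : 0 < n) (hpar : Fintype.card V % 2 = n % 2)
    (hdeg : (Fintype.card V + n) / 2 - 1 ≤ G.minDegree)
    (hα : _root_.indepNum G ≤ (Fintype.card V - n) / 2) :
    ¬ IsNFactorCritical G n ↔
      (Odd ((Fintype.card V - n) / 2) ∧
        IsJoinTwoCliques G n ((Fintype.card V - n) / 2)) := by
  classical
  constructor
  · -- forward direction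
    intro hncrit
    rw [IsNFactorCritical] at hncrit
    push_neg at hncrit
    obtain ⟨S, hScard, hnoPM⟩ := hncrit
    have hnle : n ≤ Fintype.card V := hScard ▸ Finset.card_le_univ S
    obtain ⟨m, hm⟩ : ∃ m, Fintype.card V = n + 2 * m :=
      ⟨(Fintype.card V - n) / 2, by omega⟩
    have hm2 : (Fintype.card V - n) / 2 = m := by omega
    rw [hm2] at hα ⊢
    have hmemT : ∀ x : V, x ∈ (↑S : Set V)ᶜ ↔ x ∉ S := fun x => Iff.rfl
    have hcardT : Fintype.card ↥((↑S : Set V)ᶜ) = 2 * m := by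
      rw [Fintype.card_compl_set]
      have : Fintype.card ↥(↑S : Set V) = S.card := by simp
      omega
    have hadjH : ∀ a b : ↥((↑S : Set V)ᶜ),
        (G.induce ((↑S : Set V)ᶜ)).Adj a b ↔ G.Adj ↑a ↑b := by
      intro a b; simp
    have hdegG : ∀ x : V, n + m - 1 ≤ G.degree x := by
      intro x
      have h1 := G.minDegree_le_degree x
      have h2 : n + m - 1 ≤ (Fintype.card V + n) / 2 - 1 := by omega
      omega
    have hdegH : ∀ w : ↥((↑S : Set V)ᶜ), m - 1 ≤ (G.induce ((↑S : Set V)ᶜ)).degree w := by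
      intro w
      set g : V → ↥((↑S : Set V)ᶜ) :=
        fun x => if hx : x ∈ ((↑S : Set V)ᶜ) then (⟨x, hx⟩ : ↥((↑S : Set V)ᶜ)) else w with hgdef
      have hmaps : ∀ x ∈ G.neighborFinset ↑w \ S,
          g x ∈ (G.induce ((↑S : Set V)ᶜ)).neighborFinset w := by
        intro x hx
        obtain ⟨hx1, hx2⟩ := Finset.mem_sdiff.1 hx
        have hxT : x ∈ ((↑S : Set V)ᶜ) := (hmemT x).2 hx2
        have he : g x = ⟨x, hxT⟩ := dif_pos hxT
        rw [he, SimpleGraph.mem_neighborFinset, hadjH]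
        exact (G.mem_neighborFinset ↑w x).1 hx1
      have hinj : ∀ x ∈ G.neighborFinset ↑w \ S, ∀ y ∈ G.neighborFinset ↑w \ S,
          g x = g y → x = y := by
        intro x hx y hy he
        have hxT : x ∈ ((↑S : Set V)ᶜ) := (hmemT x).2 (Finset.mem_sdiff.1 hx).2
        have hyT : y ∈ ((↑S : Set V)ᶜ) := (hmemT y).2 (Finset.mem_sdiff.1 hy).2
        rw [hgdef] at he
        simp only [dif_pos hxT, dif_pos hyT] at he
        exact congrArg Subtype.val he
      have hcle := Finset.card_le_card_of_injOn g hmaps hinj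
      have h1 : (G.neighborFinset ↑w).card - S.card ≤ (G.neighborFinset ↑w \ S).card :=
        Finset.le_card_sdiff S (G.neighborFinset ↑w)
      have h2 := hdegG ↑w
      rw [← SimpleGraph.card_neighborFinset_eq_degree] at h2
      rw [← SimpleGraph.card_neighborFinset_eq_degree]
      omega
    have hindH : ∀ I : Finset ↥((↑S : Set V)ᶜ),
        (∀ a ∈ I, ∀ b ∈ I, ¬ (G.induce ((↑S : Set V)ᶜ)).Adj a b) → I.card ≤ m := by
      intro I hI
      have hJ : ∀ a ∈ I.image Subtype.val, ∀ b ∈ I.image Subtype.val, ¬ G.Adj a b := by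
        intro a ha b hb hadj
        obtain ⟨a', ha', rfl⟩ := Finset.mem_image.1 ha
        obtain ⟨b', hb', rfl⟩ := Finset.mem_image.1 hb
        exact hI a' ha' b' hb' ((hadjH a' b').2 hadj)
      have hcard : (I.image Subtype.val).card = I.card :=
        Finset.card_image_of_injective I Subtype.val_injective
      have hle : (I.image Subtype.val).card ≤ _root_.indepNum G := by
        apply le_csSup
        · refine ⟨Fintype.card V, ?_⟩
          rintro c ⟨s, -, rfl⟩
          exact Finset.card_le_univ s
        · exact ⟨_, hJ, rfl⟩
      omega
    have hkey := key_lemma (H := G.induce ((↑S : Set V)ᶜ)) m hcardT hdegH hindH hnoPM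
    obtain ⟨hodd, A', B', hdisj', huniv', hAcard', hBcard', hAcl', hBcl', hABn'⟩ := hkey
    have hdisjS : ∀ C : Finset ↥((↑S : Set V)ᶜ), Disjoint S (C.image Subtype.val) := by
      intro C
      rw [Finset.disjoint_left]
      intro x hx hmem
      obtain ⟨c, -, rfl⟩ := Finset.mem_image.1 hmem
      exact ((hmemT _).1 c.2) hx
    -- the S-join property
    have hSadj : ∀ (v' : ↥((↑S : Set V)ᶜ)) (C : Finset ↥((↑S : Set V)ᶜ)), C.card = m →
        (∀ z : ↥((↑S : Set V)ᶜ), (G.induce ((↑S : Set V)ᶜ)).Adj v' z → z ∈ C) → v' ∈ C →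
        ∀ u ∈ S, G.Adj u ↑v' := by
      intro v' C hCcard hnb hvC u huS
      set g : V → ↥((↑S : Set V)ᶜ) :=
        fun x => if hx : x ∈ ((↑S : Set V)ᶜ) then (⟨x, hx⟩ : ↥((↑S : Set V)ᶜ)) else v' with hgdef
      have hmaps : ∀ x ∈ G.neighborFinset ↑v' \ S, g x ∈ C.erase v' := by
        intro x hx
        obtain ⟨hx1, hx2⟩ := Finset.mem_sdiff.1 hx
        have hxT : x ∈ ((↑S : Set V)ᶜ) := (hmemT x).2 hx2
        have he : g x = ⟨x, hxT⟩ := dif_pos hxT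
        have hadjx : G.Adj ↑v' x := (G.mem_neighborFinset ↑v' x).1 hx1
        rw [he]
        refine Finset.mem_erase.2 ⟨?_, hnb _ ((hadjH v' ⟨x, hxT⟩).2 hadjx)⟩
        intro e
        exact hadjx.ne' (congrArg Subtype.val e)
      have hinj : ∀ x ∈ G.neighborFinset ↑v' \ S, ∀ y ∈ G.neighborFinset ↑v' \ S,
          g x = g y → x = y := by
        intro x hx y hy he
        have hxT : x ∈ ((↑S : Set V)ᶜ) := (hmemT x).2 (Finset.mem_sdiff.1 hx).2
        have hyT : y ∈ ((↑S : Set V)ᶜ) := (hmemT y).2 (Finset.mem_sdiff.1 hy).2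
        rw [hgdef] at he
        simp only [dif_pos hxT, dif_pos hyT] at he
        exact congrArg Subtype.val he
      have hcle := Finset.card_le_card_of_injOn g hmaps hinj
      have herase : (C.erase v').card = m - 1 := by
        rw [Finset.card_erase_of_mem hvC, hCcard]
      have hsplit := Finset.card_sdiff_add_card_inter (G.neighborFinset ↑v') S
      have h2 := hdegG ↑v'
      rw [← SimpleGraph.card_neighborFinset_eq_degree] at h2
      have hm1 : 1 ≤ m := by
        rw [← hCcard]
        exact Finset.card_pos.2 ⟨v', hvC⟩
      have hSle : S.card ≤ (G.neighborFinset ↑v' ∩ S).card := by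
        rw [hScard]; omega
      have h3 : G.neighborFinset ↑v' ∩ S = S :=
        Finset.eq_of_subset_of_card_le Finset.inter_subset_right hSle
      have : u ∈ G.neighborFinset ↑v' ∩ S := h3.symm ▸ huS
      exact ((G.mem_neighborFinset ↑v' u).1 (Finset.mem_inter.1 this).1).symm
    refine ⟨hodd, S, A'.image Subtype.val, B'.image Subtype.val, hdisjS A', hdisjS B',
      (Finset.disjoint_image Subtype.val_injective).2 hdisj', ?_, hScard,
      by rw [Finset.card_image_of_injective _ Subtype.val_injective, hAcard'],
      by rw [Finset.card_image_of_injective _ Subtype.val_injective, hBcard'],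
      ?_, ?_, ?_, ?_⟩
    · -- covers univ
      apply Finset.eq_univ_iff_forall.2
      intro x
      by_cases hxS : x ∈ S
      · exact Finset.mem_union.2 (Or.inl (Finset.mem_union.2 (Or.inl hxS)))
      · have hxT : x ∈ ((↑S : Set V)ᶜ) := (hmemT x).2 hxS
        have : (⟨x, hxT⟩ : ↥((↑S : Set V)ᶜ)) ∈ A' ∪ B' := huniv' ▸ Finset.mem_univ _
        rcases Finset.mem_union.1 this with h | h
        · exact Finset.mem_union.2 (Or.inl (Finset.mem_union.2 (Or.inr
            (Finset.mem_image_of_mem _ h))))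
        · exact Finset.mem_union.2 (Or.inr (Finset.mem_image_of_mem _ h))
    · -- A clique
      intro u hu v hv hne
      obtain ⟨u', hu', rfl⟩ := Finset.mem_image.1 hu
      obtain ⟨v', hv', rfl⟩ := Finset.mem_image.1 hv
      exact (hadjH u' v').1 (hAcl' u' hu' v' hv' (fun e => hne (congrArg Subtype.val e)))
    · -- B clique
      intro u hu v hv hne
      obtain ⟨u', hu', rfl⟩ := Finset.mem_image.1 hu
      obtain ⟨v', hv', rfl⟩ := Finset.mem_image.1 hv
      exact (hadjH u' v').1 (hBcl' u' hu' v' hv' (fun e => hne (congrArg Subtype.val e)))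
    · -- A-B non-adjacency
      intro u hu v hv hadj
      obtain ⟨u', hu', rfl⟩ := Finset.mem_image.1 hu
      obtain ⟨v', hv', rfl⟩ := Finset.mem_image.1 hv
      exact hABn' u' hu' v' hv' ((hadjH u' v').2 hadj)
    · -- S joined to A ∪ B
      intro u huS v hvAB
      rcases Finset.mem_union.1 hvAB with hvA | hvB
      · obtain ⟨v', hv', rfl⟩ := Finset.mem_image.1 hvA
        refine hSadj v' A' hAcard' ?_ hv' u huS
        intro z hz
        have : z ∈ A' ∪ B' := huniv' ▸ Finset.mem_univ z
        rcases Finset.mem_union.1 this with h | h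
        · exact h
        · exact absurd hz (hABn' v' hv' z h)
      · obtain ⟨v', hv', rfl⟩ := Finset.mem_image.1 hvB
        refine hSadj v' B' hBcard' ?_ hv' u huS
        intro z hz
        have : z ∈ A' ∪ B' := huniv' ▸ Finset.mem_univ z
        rcases Finset.mem_union.1 this with h | h
        · exact absurd hz.symm (hABn' z h v' hv')
        · exact h
  · -- reverse direction
    rintro ⟨hodd, S, A, B, hSA, hSB, hAB, hcover, hScard, hAcard, hBcard, hAcl, hBcl, hABn,
      hjoin⟩
    intro hcrit
    obtain ⟨M, hM⟩ := hcrit S hScard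
    have hmemT : ∀ x : V, x ∈ (↑S : Set V)ᶜ ↔ x ∉ S := fun x => Iff.rfl
    have hPM : ∀ x : ↥((↑S : Set V)ᶜ), ∃! y, M.Adj x y :=
      SimpleGraph.Subgraph.isPerfectMatching_iff.1 hM
    set f : V → V := fun a =>
      if h : a ∈ ((↑S : Set V)ᶜ) then (Exists.choose (hPM ⟨a, h⟩)).val else a with hfdef
    have hstep : ∀ x : ↥((↑S : Set V)ᶜ), f ↑x = ↑(Exists.choose (hPM x)) := by
      intro x
      rw [hfdef]
      simp only [dif_pos x.2]
    have hadjf : ∀ x : ↥((↑S : Set V)ᶜ), M.Adj x (Exists.choose (hPM x)) :=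
      fun x => (Exists.choose_spec (hPM x)).1
    have huniq : ∀ x y : ↥((↑S : Set V)ᶜ), M.Adj x y → y = Exists.choose (hPM x) :=
      fun x y h => (Exists.choose_spec (hPM x)).2 y h
    have hGadj : ∀ x : ↥((↑S : Set V)ᶜ), G.Adj ↑x (f ↑x) := by
      intro x
      rw [hstep x]
      have := M.adj_sub (hadjf x)
      simpa using this
    have hconds : ∀ a ∈ A, f a ∈ A ∧ f a ≠ a ∧ f (f a) = a := by
      intro a ha
      have haT : a ∈ ((↑S : Set V)ᶜ) :=
        (hmemT a).2 (fun hS => Finset.disjoint_left.1 hSA hS ha)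
      have h1 : G.Adj a (f a) := hGadj ⟨a, haT⟩
      have hfaT : f a ∈ ((↑S : Set V)ᶜ) := by
        rw [hstep ⟨a, haT⟩]
        exact (Exists.choose (hPM ⟨a, haT⟩)).2
      have hfaA : f a ∈ A := by
        have hmem : f a ∈ S ∪ A ∪ B := hcover ▸ Finset.mem_univ _
        rcases Finset.mem_union.1 hmem with h | hB
        · rcases Finset.mem_union.1 h with hS | hA
          · exact absurd hS ((hmemT (f a)).1 hfaT)
          · exact hA
        · exact absurd h1 (hABn a ha (f a) hB)
      refine ⟨hfaA, h1.ne', ?_⟩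
      have h2 : f (f a) = ↑(Exists.choose (hPM ⟨f a, hfaT⟩)) := hstep ⟨f a, hfaT⟩
      have h4 : M.Adj ⟨a, haT⟩ ⟨f a, hfaT⟩ := by
        have h5 := hadjf ⟨a, haT⟩
        rwa [show (⟨f a, hfaT⟩ : ↥((↑S : Set V)ᶜ)) = Exists.choose (hPM ⟨a, haT⟩) from
          Subtype.ext (hstep ⟨a, haT⟩)]
      have h5 := huniq _ _ h4.symm
      rw [h2, ← h5]
    have heven : Even A.card := even_card_of_inv hconds
    rw [hAcard] at heven
    exact (Nat.not_odd_iff_even.2 heven) hodd
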